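/- Let $R$ be a Noetherian ring, $M$ a finitely generated torsion-free $R$-module, and $a$ a non-zerodivisor of $R$. Then $\mathrm{U}(aM)=a\widetilde{M}\cap M$ inside $V=\mathrm{Q}(R)\otimes_R M$. -/

import Mathlib

open Pointwise

/-- The height of an ideal. -/
noncomputable def idealHt {R : Type*} [CommRing R] (I : Ideal R) : ℕ∞ :=
  ⨅ p ∈ {p : PrimeSpectrum R | I ≤ p.asIdeal}, Order.height p

/-- `Min¹_R(M/aM)`: the height-one minimal primes of the support of `M/aM`
(equivalently, of the annihilator of `M/aM`, as `M` is finitely generated). -/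
noncomputable def minOne (R : Type*) [CommRing R] (M : Type*) [AddCommGroup M]
    [Module R M] (a : R) : Set (Ideal R) :=
  {p | p ∈ (Module.annihilator R (M ⧸ (a • (⊤ : Submodule R M)))).minimalPrimes ∧
    idealHt p = 1}

/-- `U(aM)`: the intersection of the primary components of `aM` in `M` at the
height-one minimal primes of `M/aM` (the primary component at a minimal prime
`p` being the saturation `{x ∈ M | sx ∈ aM for some s ∉ p}`); by convention
`U(aM) = M` when there are no such primes. -/
noncomputable def Uset (R : Type*) [CommRing R] (M : Type*) [AddCommGroup M]
    [Module R M] (a : R) : Set M :=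
  ⋂ p ∈ minOne R M a, {x : M | ∃ s, s ∉ p ∧ s • x ∈ (a • (⊤ : Submodule R M))}

-- auxiliary: a nonzerodivisor is not in any minimal prime
lemma aux_nzd_not_mem_minimal {R : Type*} [CommRing R] {q : Ideal R}
    (hq : q ∈ minimalPrimes R) {a : R} (ha : a ∈ nonZeroDivisors R) : a ∉ q := by
  intro haq
  haveI : q.IsPrime := hq.1.1
  have hnil : IsNilpotent (algebraMap R (Localization q.primeCompl) a) := by
    exact absurd ha (notMem_nonZeroDivisors_of_mem_mem_minimalPrimes haq hq)
  obtain ⟨n, hn⟩ := hnil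
  rw [← map_pow] at hn
  obtain ⟨m, hm⟩ := (IsLocalization.map_eq_zero_iff q.primeCompl _ _).mp hn
  have : (m : R) = 0 := (mem_nonZeroDivisors_iff_right.mp (pow_mem ha n)) _ hm
  exact m.2 (this ▸ q.zero_mem)

-- auxiliary: a prime containing a nonzerodivisor has height ≥ 1
lemma aux_height_pos {R : Type*} [CommRing R] (P : PrimeSpectrum R) {a : R}
    (ha : a ∈ nonZeroDivisors R) (haP : a ∈ P.asIdeal) : 1 ≤ Order.height P := by
  obtain ⟨q, hq, hqP⟩ := Ideal.exists_minimalPrimes_le (I := (⊥ : Ideal R)) bot_le (J := P.asIdeal)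
  haveI : q.IsPrime := hq.1.1
  have hne : (⟨q, this⟩ : PrimeSpectrum R) ≠ P := by
    intro h
    have hq' : q = P.asIdeal := congrArg PrimeSpectrum.asIdeal h
    exact aux_nzd_not_mem_minimal hq ha (by rw [hq']; exact haP)
  have hlt : (⟨q, this⟩ : PrimeSpectrum R) < P :=
    lt_of_le_of_ne (show (⟨q, this⟩ : PrimeSpectrum R) ≤ P from hqP) hne
  rw [ENat.one_le_iff_ne_zero, Ne, Order.height_eq_zero]
  exact fun hmin => absurd (hmin hlt.le) (not_le_of_gt hlt)

-- key lemma
lemma aux_key {R : Type*} [CommRing R] {M : Type*} [AddCommGroup M] [Module R M]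
    {a : R} (ha : a ∈ nonZeroDivisors R) {x : M} (hx : x ∈ Uset R M a) :
    2 ≤ idealHt ((a • (⊤ : Submodule R M)).comap (LinearMap.toSpanSingleton R M x)) := by
  set J : Ideal R := (a • (⊤ : Submodule R M)).comap (LinearMap.toSpanSingleton R M x) with hJ
  set A : Ideal R := Module.annihilator R (M ⧸ (a • (⊤ : Submodule R M))) with hA
  have hAJ : A ≤ J := by
    intro r hr
    have := (Module.mem_annihilator).mp hr (Submodule.Quotient.mk x)
    rw [← Submodule.Quotient.mk_smul, Submodule.Quotient.mk_eq_zero] at this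
    exact this
  have haA : a ∈ A := by
    rw [Module.mem_annihilator]
    intro m
    obtain ⟨m, rfl⟩ := Submodule.Quotient.mk_surjective _ m
    rw [← Submodule.Quotient.mk_smul, Submodule.Quotient.mk_eq_zero]
    exact Submodule.smul_mem_pointwise_smul m a ⊤ trivial
  rw [idealHt]
  refine le_iInf₂ fun P hP => ?_
  obtain ⟨q, hq, hqP⟩ := Ideal.exists_minimalPrimes_le (hAJ.trans hP)
  haveI hqprime : q.IsPrime := hq.1.1
  have haq : a ∈ q := hq.1.2 haA
  have h1 : 1 ≤ Order.height (⟨q, hqprime⟩ : PrimeSpectrum R) :=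
    aux_height_pos _ ha haq
  rcases eq_or_lt_of_le hqP with heq | hlt
  · -- q = P.asIdeal : P is a minimal prime of A
    by_contra h2
    push_neg at h2
    have hP1 : 1 ≤ Order.height P := aux_height_pos P ha (heq ▸ haq)
    have hPeq : Order.height P = 1 := by
      refine le_antisymm ?_ hP1
      have := (ENat.lt_add_one_iff (by norm_num : (1:ℕ∞) ≠ ⊤)).mp (by exact_mod_cast h2)
      exact this
    have hqht : idealHt q = 1 := by
      refine le_antisymm ?_ ?_
      · calc idealHt q ≤ Order.height P := iInf₂_le P (heq.le)
        _ = 1 := hPeq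
      · refine le_iInf₂ fun P' hP' => aux_height_pos P' ha (hP' haq)
    have hqmin : q ∈ minOne R M a := ⟨hq, hqht⟩
    obtain ⟨s, hs, hsx⟩ := Set.mem_iInter₂.mp hx q hqmin
    exact hs (heq ▸ hP hsx)
  · -- q < P.asIdeal
    have hQP : (⟨q, hqprime⟩ : PrimeSpectrum R) < P := hlt
    by_cases htop : Order.height (⟨q, hqprime⟩ : PrimeSpectrum R) = ⊤
    · calc (2:ℕ∞) ≤ ⊤ := le_top
      _ = Order.height (⟨q, hqprime⟩ : PrimeSpectrum R) := htop.symm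
      _ ≤ Order.height P := Order.height_mono hQP.le
    · have := Order.height_strictMono hQP (lt_top_iff_ne_top.mpr htop)
      calc (2:ℕ∞) = 1 + 1 := by norm_num
      _ ≤ Order.height P := (ENat.add_one_le_iff (by norm_num)).mpr (lt_of_le_of_lt h1 this)


/-- for a finitely generated torsion-free module `M` over a
Noetherian ring `R` and a non-zerodivisor `a`, `U(aM) = aM̃ ∩ M` inside
`V = Q(R) ⊗ M` (realized as the localized module at the non-zerodivisors, with
`M` embedded by `mk`). -/
theorem stmt12 {R : Type*} [CommRing R] [IsNoetherianRing R]
    {M : Type*} [AddCommGroup M] [Module R M] [Module.Finite R M]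
    (htf : ∀ r ∈ nonZeroDivisors R, Function.Injective fun x : M => r • x)
    (a : R) (ha : a ∈ nonZeroDivisors R)
    (T : Set (LocalizedModule (nonZeroDivisors R) M))
    (hT : T = {f | ∃ I : Ideal R, 2 ≤ idealHt I ∧ ∀ i ∈ I,
      i • f ∈ LinearMap.range (LocalizedModule.mkLinearMap (nonZeroDivisors R) M)}) :
    (LocalizedModule.mkLinearMap (nonZeroDivisors R) M) '' Uset R M a =
      (a • T) ∩ Set.range (LocalizedModule.mkLinearMap (nonZeroDivisors R) M) := by
  set mkM := LocalizedModule.mkLinearMap (nonZeroDivisors R) M with hmkM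
  have hinj : Function.Injective mkM := by
    intro y z h
    simp only [hmkM, LocalizedModule.mkLinearMap_apply] at h
    obtain ⟨u, hu⟩ := LocalizedModule.mk_eq.mp h
    simp only [one_smul] at hu
    exact htf u u.2 hu
  ext f
  constructor
  · rintro ⟨x, hx, rfl⟩
    refine ⟨?_, ⟨x, rfl⟩⟩
    refine Set.mem_smul_set.mpr ⟨LocalizedModule.mk x ⟨a, ha⟩, ?_, ?_⟩
    · rw [hT]
      refine ⟨_, aux_key ha hx, fun i hi => ?_⟩
      have hix : i • x ∈ a • (⊤ : Submodule R M) := Submodule.mem_comap.mp hi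
      obtain ⟨m, -, hm⟩ := Set.mem_smul_set.mp
        (by rw [← Submodule.coe_pointwise_smul]; exact hix :
          i • x ∈ a • ((⊤ : Submodule R M) : Set M))
      refine ⟨m, ?_⟩
      simp only [hmkM, LocalizedModule.mkLinearMap_apply]
      rw [LocalizedModule.smul'_mk]
      rw [LocalizedModule.mk_eq]
      refine ⟨1, ?_⟩
      rw [one_smul, one_smul, one_smul, Submonoid.mk_smul]
      exact hm
    · rw [LocalizedModule.smul'_mk]
      simp only [hmkM, LocalizedModule.mkLinearMap_apply]
      rw [LocalizedModule.mk_eq]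
      refine ⟨1, ?_⟩
      rw [one_smul, one_smul, one_smul, Submonoid.mk_smul]
  · rintro ⟨hfa, ⟨x, rfl⟩⟩
    obtain ⟨g, hgT, hag⟩ := Set.mem_smul_set.mp hfa
    refine ⟨x, ?_, rfl⟩
    rw [hT] at hgT
    obtain ⟨I, hI2, hImem⟩ := hgT
    refine Set.mem_iInter₂.mpr fun p hp => ?_
    obtain ⟨hpmin, hpht⟩ := hp
    haveI : p.IsPrime := hpmin.1.1
    have hnle : ¬ I ≤ p := by
      intro hIp
      have : idealHt I ≤ idealHt p := by
        refine le_iInf₂ fun P hP => iInf₂_le P (hIp.trans hP)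
      rw [hpht] at this
      exact absurd (hI2.trans this) (by norm_num)
    obtain ⟨s, hsI, hsp⟩ := SetLike.not_le_iff_exists.mp hnle
    obtain ⟨m, hm⟩ := hImem s hsI
    refine ⟨s, hsp, ?_⟩
    have key : mkM (a • m) = mkM (s • x) := by
      rw [map_smul, map_smul, hm, ← hag, smul_comm]
    have := hinj key
    rw [← this]
    exact Submodule.smul_mem_pointwise_smul m a ⊤ trivial
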